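/- Let G be a nilpotent group endowed with a left-invariant distance d, and suppose that for every x ∈ G the right translation R_x(y) = yx is continuous. Then the inversion map Inv : G → G, x ↦ x⁻¹, is Cauchy-continuous: it is continuous and maps Cauchy sequences in G to Cauchy sequences in G. -/

import Mathlib

theorem stmt9 {G : Type*} [Group G] [MetricSpace G] [Group.IsNilpotent G]
    (hleft : ∀ x y z : G, dist (x * y) (x * z) = dist y z)
    (hR : ∀ x : G, Continuous fun y : G => y * x) :
    Continuous (fun x : G => x⁻¹) ∧
      ∀ u : ℕ → G, CauchySeq u → CauchySeq fun n => (u n)⁻¹ := by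
  -- left translations are isometries, hence continuous
  have Lcont : ∀ w : G, Continuous (fun y : G => w * y) := by
    intro w
    rw [Metric.continuous_iff]
    intro b ε hε
    exact ⟨ε, hε, fun a ha => by rwa [hleft]⟩
  -- distance to 1 is invariant under inversion
  have d_inv : ∀ x : G, dist x⁻¹ 1 = dist x 1 := by
    intro x
    calc dist x⁻¹ 1 = dist (x * x⁻¹) (x * 1) := (hleft x x⁻¹ 1).symm
      _ = dist 1 x := by rw [mul_one]; congr 1; group
      _ = dist x 1 := dist_comm _ _
  have dleft1 : ∀ w x : G, dist (w * x) w = dist x 1 := by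
    intro w x
    calc dist (w * x) w = dist (w * x) (w * 1) := by rw [mul_one]
      _ = dist x 1 := hleft w x 1
  -- submultiplicativity of distance to 1
  have dmul : ∀ x y : G, dist (x * y) 1 ≤ dist x 1 + dist y 1 := by
    intro x y
    calc dist (x * y) 1 ≤ dist (x * y) x + dist x 1 := dist_triangle _ _ _
      _ = dist y 1 + dist x 1 := by rw [dleft1]
      _ = dist x 1 + dist y 1 := by ring
  -- continuity of inversion
  have hinv : Continuous (fun x : G => x⁻¹) := by
    rw [Metric.continuous_iff]
    intro b ε hε
    obtain ⟨δ, hδ, h⟩ := Metric.continuous_iff.mp (hR b⁻¹) b ε hε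
    refine ⟨δ, hδ, fun a ha => ?_⟩
    have h2 := h a ha
    have e1 : dist a⁻¹ b⁻¹ = dist (a * b⁻¹) (b * b⁻¹) := by
      calc dist a⁻¹ b⁻¹ = dist (a * a⁻¹) (a * b⁻¹) := (hleft a a⁻¹ b⁻¹).symm
        _ = dist (a * b⁻¹) (a * a⁻¹) := dist_comm _ _
        _ = dist (a * b⁻¹) (b * b⁻¹) := by congr 1; group
    rw [e1]; exact h2
  refine ⟨hinv, ?_⟩
  intro u hu
  obtain ⟨k, hk⟩ := nilpotent_iff_lowerCentralSeries.mp ‹Group.IsNilpotent G›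
  have hC := Metric.cauchySeq_iff.mp hu
  -- the inductive step for asymptotic equicontinuity of conjugations
  have hstep : ∀ j : ℕ,
      (∀ ε > 0, ∃ δ > 0, ∃ N₀ : ℕ, ∀ N ≥ N₀, ∀ x ∈ (⊤ : Subgroup G).lowerCentralSeries (j + 1),
        dist x 1 < δ → dist (u N * x * (u N)⁻¹) 1 < ε) →
      (∀ ε > 0, ∃ δ > 0, ∃ N₀ : ℕ, ∀ N ≥ N₀, ∀ x ∈ (⊤ : Subgroup G).lowerCentralSeries j,
        dist x 1 < δ → dist (u N * x * (u N)⁻¹) 1 < ε) := by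
    intro j IH ε hε
    obtain ⟨δ', hδ', N₀', hE'⟩ := IH (ε / 4) (by positivity)
    obtain ⟨N₃, hN₃⟩ := hC (δ' / 8) (by positivity)
    set N₂ := max N₃ N₀' with hN₂
    set w := u N₂ with hw
    have hψ : Continuous (fun y : G => w * y * w⁻¹) := (hR w⁻¹).comp (Lcont w)
    obtain ⟨δ₁, hδ₁, hψ1⟩ := Metric.continuous_iff.mp hψ 1 (ε / 8) (by positivity)
    have hψone : (w * 1 * w⁻¹ : G) = 1 := by group
    refine ⟨min δ₁ (min (δ' / 8) (ε / 8)), by positivity, N₂, ?_⟩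
    intro N hN x hx hxd
    have hxδ₁ : dist x 1 < δ₁ := hxd.trans_le (min_le_left _ _)
    have hxδ' : dist x 1 < δ' / 8 :=
      hxd.trans_le ((min_le_right _ _).trans (min_le_left _ _))
    have hxε : dist x 1 < ε / 8 :=
      hxd.trans_le ((min_le_right _ _).trans (min_le_right _ _))
    set d := w⁻¹ * u N with hd
    have hwd : w * d = u N := by rw [hd]; group
    have hdist_d : dist d 1 < δ' / 8 := by
      have h1 := hN₃ N (le_trans (le_max_left _ _) hN) N₂ (le_max_left _ _)
      calc dist d 1 = dist (w * d) (w * 1) := (hleft _ _ _).symm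
        _ = dist (u N) w := by rw [mul_one, hwd]
        _ < δ' / 8 := h1
    set z := x⁻¹ * d * x * d⁻¹ with hz
    have hzmem : z ∈ (⊤ : Subgroup G).lowerCentralSeries (j + 1) := by
      rw [lowerCentralSeries_succ]
      open scoped commutatorElement in
      have e : z = ⁅x⁻¹, d⁆ := by rw [hz, commutatorElement_def]; group
      rw [e]
      exact Subgroup.commutator_mem_commutator (inv_mem hx) (Subgroup.mem_top d)
    have hzdist : dist z 1 < δ' := by
      have e2 : z = x⁻¹ * (d * (x * d⁻¹)) := by rw [hz]; group
      have hb : dist z 1 ≤ dist x⁻¹ 1 + (dist d 1 + (dist x 1 + dist d⁻¹ 1)) := by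
        rw [e2]
        refine (dmul _ _).trans ?_
        refine add_le_add (le_refl _) ((dmul _ _).trans ?_)
        exact add_le_add (le_refl _) (dmul _ _)
      rw [d_inv, d_inv] at hb
      linarith
    have hY : dist (w * z * w⁻¹) 1 < ε / 4 := hE' N₂ (le_max_right _ _) z hzmem hzdist
    have hcomW : dist (x⁻¹ * (w * x * w⁻¹)) 1 < ε / 4 := by
      have h1 : dist (w * x * w⁻¹) 1 < ε / 8 := by
        have := hψ1 x hxδ₁
        rwa [hψone] at this
      have hb : dist (x⁻¹ * (w * x * w⁻¹)) 1 ≤ dist x⁻¹ 1 + dist (w * x * w⁻¹) 1 := dmul _ _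
      rw [d_inv] at hb
      linarith
    have key : u N * x * (u N)⁻¹ = x * ((x⁻¹ * (w * x * w⁻¹)) * (w * z * w⁻¹)) := by
      rw [hz, hd]; group
    have hb : dist (u N * x * (u N)⁻¹) 1
        ≤ dist x 1 + (dist (x⁻¹ * (w * x * w⁻¹)) 1 + dist (w * z * w⁻¹) 1) := by
      rw [key]
      refine (dmul _ _).trans ?_
      exact add_le_add (le_refl _) (dmul _ _)
    linarith
  -- downward induction along the lower central series
  have main : ∀ m : ℕ, ∀ ε > 0, ∃ δ > 0, ∃ N₀ : ℕ, ∀ N ≥ N₀,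
      ∀ x ∈ (⊤ : Subgroup G).lowerCentralSeries (k - m), dist x 1 < δ → dist (u N * x * (u N)⁻¹) 1 < ε := by
    intro m
    induction m with
    | zero =>
      intro ε hε
      refine ⟨1, one_pos, 0, fun N _ x hx _ => ?_⟩
      rw [Nat.sub_zero, hk, Subgroup.mem_bot] at hx
      rw [hx]
      have e : (u N * 1 * (u N)⁻¹ : G) = 1 := by group
      rw [e]
      simpa using hε
    | succ m IH =>
      rcases Nat.lt_or_ge m k with hmk | hmk
      · have hidx : k - m = (k - (m + 1)) + 1 := by omega
        rw [hidx] at IH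
        exact hstep (k - (m + 1)) IH
      · have hidx : k - (m + 1) = k - m := by omega
        rw [hidx]
        exact IH
  have E0 := main k
  rw [Nat.sub_self] at E0
  rw [Metric.cauchySeq_iff]
  intro ε hε
  obtain ⟨δ, hδ, N₀, hE⟩ := E0 ε hε
  obtain ⟨N₃, hN₃⟩ := hC (δ / 2) (by positivity)
  refine ⟨max N₀ N₃, fun m hm n hn => ?_⟩
  set W := u (max N₀ N₃) with hW
  set a := W⁻¹ * u m with ha
  set b := W⁻¹ * u n with hb
  have hda : dist a 1 < δ / 2 := by
    calc dist a 1 = dist (W * a) (W * 1) := (hleft _ _ _).symm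
      _ = dist (u m) W := by rw [mul_one, ha]; congr 1; group
      _ < δ / 2 := hN₃ m (le_trans (le_max_right _ _) hm) _ (le_max_right _ _)
  have hdb : dist b 1 < δ / 2 := by
    calc dist b 1 = dist (W * b) (W * 1) := (hleft _ _ _).symm
      _ = dist (u n) W := by rw [mul_one, hb]; congr 1; group
      _ < δ / 2 := hN₃ n (le_trans (le_max_right _ _) hn) _ (le_max_right _ _)
  have hdab : dist (a * b⁻¹) 1 < δ := by
    have h1 : dist (a * b⁻¹) 1 ≤ dist a 1 + dist b⁻¹ 1 := dmul _ _
    rw [d_inv] at h1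
    linarith
  have hmem : a * b⁻¹ ∈ (⊤ : Subgroup G).lowerCentralSeries 0 := by
    rw [lowerCentralSeries_zero]; exact Subgroup.mem_top _
  have happ := hE (max N₀ N₃) (le_max_left _ _) (a * b⁻¹) hmem hdab
  have key : W * (a * b⁻¹) * W⁻¹ = u m * (u n)⁻¹ := by rw [ha, hb]; group
  rw [key] at happ
  calc dist (u m)⁻¹ (u n)⁻¹ = dist (u m * (u m)⁻¹) (u m * (u n)⁻¹) := (hleft _ _ _).symm
    _ = dist 1 (u m * (u n)⁻¹) := by congr 1; group
    _ = dist (u m * (u n)⁻¹) 1 := dist_comm _ _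
    _ < ε := happ
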